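/- Let ξ and η be commonotone real random variables on a probability space. Then there exist nondecreasing functions f, g : ℝ → ℝ such that ξ = f(ξ + η) and η = g(ξ + η) almost surely. -/

import Mathlib

open MeasureTheory ProbabilityTheory

/-- The conditional expectation of the indicator of a set, as a real-valued function. -/
noncomputable def condIndicator {Ω : Type*} (m1 : MeasurableSpace Ω) [MeasurableSpace Ω]
    (μ : Measure Ω) (A : Set Ω) : Ω → ℝ :=
  μ[A.indicator (fun _ => (1 : ℝ)) | m1]

/-- The ambient σ-algebra is atomless conditionally to `m1`: for every measurable set `A`
there is a measurable `B ⊆ A` with `0 < E[1_B ∣ m1] < E[1_A ∣ m1]` a.s. on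
`{E[1_A ∣ m1] > 0}`. -/
def CondAtomless {Ω : Type*} (m1 : MeasurableSpace Ω) [MeasurableSpace Ω]
    (μ : Measure Ω) : Prop :=
  ∀ A : Set Ω, MeasurableSet A →
    ∃ B : Set Ω, MeasurableSet B ∧ B ⊆ A ∧
      ∀ᵐ ω ∂μ, 0 < condIndicator m1 μ A ω →
        0 < condIndicator m1 μ B ω ∧ condIndicator m1 μ B ω < condIndicator m1 μ A ω

/-- Two real random variables are commonotone if both are a.s. equal to nondecreasing
functions of a common random variable. -/
def Commonotone {Ω : Type*} [MeasurableSpace Ω] (μ : Measure Ω) (ξ η : Ω → ℝ) : Prop :=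
  ∃ (f g : ℝ → ℝ) (ζ : Ω → ℝ), Monotone f ∧ Monotone g ∧ Measurable ζ ∧
    ξ =ᵐ[μ] (fun ω => f (ζ ω)) ∧ η =ᵐ[μ] (fun ω => g (ζ ω))

lemma key_mono {f g : ℝ → ℝ} (hf : Monotone f) (hg : Monotone g) {x y : ℝ}
    (hxy : f x + g x ≤ f y + g y) : f x ≤ f y := by
  rcases le_total x y with h | h
  · exact hf h
  · have := hg h
    linarith

lemma exists_factor {f g : ℝ → ℝ} (hf : Monotone f) (hg : Monotone g) :
    ∃ F : ℝ → ℝ, Monotone F ∧ ∀ y, F (f y + g y) = f y := by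
  classical
  set h : ℝ → ℝ := fun x => f x + g x with hh
  have bddB : ∀ t : ℝ, BddBelow (f '' {x | t ≤ h x}) := by
    intro t
    by_cases hz : ∃ z, h z < t
    · obtain ⟨z, hz⟩ := hz
      refine ⟨f z, ?_⟩
      rintro _ ⟨x, hx, rfl⟩
      refine hf ?_
      by_contra hc
      push_neg at hc
      have := hf hc.le
      have := hg hc.le
      simp only [Set.mem_setOf_eq, hh] at hx hz
      linarith
    · push_neg at hz
      refine ⟨min (t - g 0) (f 0), ?_⟩
      rintro _ ⟨x, hx, rfl⟩
      rcases le_total x 0 with h0 | h0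
      · have h1 := hg h0
        have h2 := hz x
        simp only [hh] at h2
        have : t - g 0 ≤ f x := by linarith
        exact le_trans (min_le_left _ _) this
      · exact le_trans (min_le_right _ _) (hf h0)
  have bddA : ∀ t : ℝ, (¬ ∃ x, t ≤ h x) → BddAbove (Set.range f) := by
    intro t ht
    push_neg at ht
    refine ⟨max (t - g 0) (f 0), ?_⟩
    rintro _ ⟨x, rfl⟩
    rcases le_total x 0 with h0 | h0
    · exact le_trans (hf h0) (le_max_right _ _)
    · have h1 := hg h0
      have h2 := (ht x).le
      simp only [hh] at h2
      have : f x ≤ t - g 0 := by linarith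
      exact le_trans this (le_max_left _ _)
  refine ⟨fun t => if ht : ∃ x, t ≤ h x then sInf (f '' {x | t ≤ h x}) else sSup (Set.range f),
    ?_, ?_⟩
  · intro t₁ t₂ hle
    by_cases h1 : ∃ x, t₁ ≤ h x <;> by_cases h2 : ∃ x, t₂ ≤ h x
    · simp only [dif_pos h1, dif_pos h2]
      refine csInf_le_csInf (bddB t₁) ?_ ?_
      · obtain ⟨x, hx⟩ := h2
        exact ⟨f x, ⟨x, hx, rfl⟩⟩
      · exact Set.image_mono (fun x hx => le_trans hle hx)
    · simp only [dif_pos h1, dif_neg h2]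
      obtain ⟨x, hx⟩ := h1
      calc sInf (f '' {x | t₁ ≤ h x}) ≤ f x := csInf_le (bddB t₁) ⟨x, hx, rfl⟩
        _ ≤ sSup (Set.range f) := le_csSup (bddA t₂ h2) ⟨x, rfl⟩
    · exact absurd (h2.imp fun x hx => le_trans hle hx) h1
    · simp only [dif_neg h1, dif_neg h2]
      exact le_refl _
  · intro y
    have hy : ∃ x, h y ≤ h x := ⟨y, le_refl _⟩
    have : f y + g y = h y := rfl
    simp only [this, dif_pos hy]
    refine IsLeast.csInf_eq ⟨⟨y, show h y ≤ h y from le_refl _, rfl⟩, ?_⟩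
    rintro _ ⟨x, hx, rfl⟩
    exact key_mono hf hg hx

theorem commonotone_sum_representation {Ω : Type*} [MeasurableSpace Ω]
    (μ : Measure Ω) [IsProbabilityMeasure μ] (ξ η : Ω → ℝ) (hξ : Measurable ξ)
    (hη : Measurable η) (hcom : Commonotone μ ξ η) :
    ∃ f g : ℝ → ℝ, Monotone f ∧ Monotone g ∧
      ξ =ᵐ[μ] (fun ω => f (ξ ω + η ω)) ∧ η =ᵐ[μ] (fun ω => g (ξ ω + η ω)) := by
  obtain ⟨f, g, ζ, hf, hg, hζ, hξe, hηe⟩ := hcom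
  obtain ⟨F, hF, hFeq⟩ := exists_factor hf hg
  obtain ⟨G, hG, hGeq⟩ := exists_factor hg hf
  refine ⟨F, G, hF, hG, ?_, ?_⟩
  · filter_upwards [hξe, hηe] with ω h1 h2
    rw [h1, h2, hFeq]
  · filter_upwards [hξe, hηe] with ω h1 h2
    rw [h1, h2, add_comm, hGeq]
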